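/- arXiv:2008.07212 — 3 statements merged into one kernel-verified Lean document; each statement's English description precedes it below -/
import Mathlib

section
/- Let 1 ≤ m < n and let B₁, B₂ ⊆ [n]∖[m] be nonempty with B₁ ⊄ B₂ and B₂ ⊄ B₁. Let f : 𝔽₂ⁿ → 𝔽₂ be defined by f(x) = 1 if and only if supp(x) is a nonempty down-closed subset of ℍ(m,n) contained in [m]∪B₁ or in [m]∪B₂. Then: wt(c_f(0,0)) = 0; wt(c_f(0,u)) = 2^{n−1} for all u ≠ 0; wt(c_f(1,0)) = 2^m − 2 + 2^{|B₁|} + 2^{|B₂|} − 2^{|B₁∩B₂|}; and for every nonzero u = (v,w) ∈ 𝔽₂ⁿ, wt(c_f(1,u)) = 2^{n−1} − 1 + 2^m·χ₀ + (−1)^{wt(v)}·(2^{|B₁|}χ₁ + 2^{|B₂|}χ₂ − 2^{|B₁∩B₂|}χ₁₂ − 1), where χ₀ = 1 iff v = 0, χ₁ = 1 iff supp(w) ∩ B₁ = ∅, χ₂ = 1 iff supp(w) ∩ B₂ = ∅, and χ₁₂ = 1 iff supp(w) ∩ (B₁∩B₂) = ∅ (each being 0 otherwise). -/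
open Finset

/-- The order relation of the hierarchical poset `ℍ(m,n)` on `Fin n`:
`i ⪯ j` iff `i = j`, or `i` lies in the bottom level `[m]` and `j` in the top level. -/
def Hle (n m : ℕ) (i j : Fin n) : Prop :=
  i = j ∨ ((i : ℕ) < m ∧ m ≤ (j : ℕ))

instance (n m : ℕ) : DecidableRel (Hle n m) := fun i j =>
  decidable_of_iff (i = j ∨ ((i : ℕ) < m ∧ m ≤ (j : ℕ))) Iff.rfl

/-- Down-closed subsets of the hierarchical poset `ℍ(m,n)`. -/
def HDownClosed (n m : ℕ) (S : Finset (Fin n)) : Prop :=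
  ∀ i j : Fin n, Hle n m i j → j ∈ S → i ∈ S

instance (n m : ℕ) : DecidablePred (HDownClosed n m) := fun S =>
  decidable_of_iff (∀ i j : Fin n, Hle n m i j → j ∈ S → i ∈ S) Iff.rfl

/-- The bottom level `[m]` of `ℍ(m,n)`, viewed inside `Fin n`. -/
def lowSet (n m : ℕ) : Finset (Fin n) :=
  Finset.univ.filter (fun i => (i : ℕ) < m)

/-- The support of a vector of `𝔽₂ⁿ`, as a subset of `[n]`. -/
def supp {n : ℕ} (x : Fin n → ZMod 2) : Finset (Fin n) :=
  Finset.univ.filter (fun i => x i ≠ 0)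

/-- The standard inner product on `𝔽₂ⁿ`. -/
def ip {n : ℕ} (u x : Fin n → ZMod 2) : ZMod 2 := ∑ i, u i * x i

/-- The Hamming weight of the codeword `c_{D,u} = (u·x)_{x ∈ D}`. -/
def wtD {n : ℕ} (D : Finset (Fin n → ZMod 2)) (u : Fin n → ZMod 2) : ℕ :=
  (D.filter (fun x => ip u x = 1)).card

/-- The Hamming weight of the codeword `c_f(s,u) = (s·f(x) + u·x)_{x ∈ 𝔽₂ⁿ ∖ {0}}`. -/
def wtF {n : ℕ} (f : (Fin n → ZMod 2) → ZMod 2) (s : ZMod 2) (u : Fin n → ZMod 2) : ℕ :=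
  (Finset.univ.filter (fun x : Fin n → ZMod 2 => x ≠ 0 ∧ s * f x + ip u x = 1)).card

/-- The Hamming weight of the first `m` coordinates of `u` (the part `v` of `u = (v,w)`). -/
def wtLow (n m : ℕ) (u : Fin n → ZMod 2) : ℕ :=
  (Finset.univ.filter (fun i : Fin n => (i : ℕ) < m ∧ u i ≠ 0)).card

namespace Stmt11Aux

variable {n : ℕ}

lemma zmod2_em (a : ZMod 2) : a = 0 ∨ a = 1 := by revert a; decide

lemma zmod2_ne (a : ZMod 2) : ¬ a = 0 ↔ a = 1 := by revert a; decide

/-- The indicator vector of a set. -/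
def ind (A : Finset (Fin n)) : Fin n → ZMod 2 := fun i => if i ∈ A then 1 else 0

lemma supp_ind (A : Finset (Fin n)) : supp (ind A) = A := by
  ext i; by_cases h : i ∈ A <;> simp [supp, ind, h]

lemma ind_supp (x : Fin n → ZMod 2) : ind (supp x) = x := by
  funext i
  rcases zmod2_em (x i) with h | h <;> simp [ind, supp, h]

lemma supp_zero : supp (0 : Fin n → ZMod 2) = ∅ := by simp [supp]

lemma supp_eq_empty (x : Fin n → ZMod 2) : supp x = ∅ ↔ x = 0 := by
  constructor
  · intro h
    have := ind_supp x
    rw [h] at this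
    funext i
    rw [← this]; simp [ind]
  · rintro rfl; exact supp_zero

lemma ip_card (u x : Fin n → ZMod 2) :
    ip u x = (((supp u ∩ supp x).card : ℕ) : ZMod 2) := by
  have h : ∀ a b : ZMod 2, a * b = if a ≠ 0 ∧ b ≠ 0 then 1 else 0 := by decide
  have h2 : ip u x = ∑ i : Fin n, if u i ≠ 0 ∧ x i ≠ 0 then (1 : ZMod 2) else 0 :=
    Finset.sum_congr rfl (fun i _ => h (u i) (x i))
  rw [h2, Finset.sum_boole]
  have he : Finset.univ.filter (fun i => u i ≠ 0 ∧ x i ≠ 0) = supp u ∩ supp x := by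
    ext i; simp [supp]
  rw [he]

lemma ip_zero_right (u : Fin n → ZMod 2) : ip u 0 = 0 := by simp [ip]

lemma ip_zero_left (x : Fin n → ZMod 2) : ip 0 x = 0 := by simp [ip]

/-- The character `A ↦ (-1)^{|U ∩ A|}`. -/
def eps (U A : Finset (Fin n)) : ℤ := if ((U ∩ A).card : ZMod 2) = 0 then 1 else -1

lemma eps_empty_left (A : Finset (Fin n)) : eps ∅ A = 1 := by
  simp [eps]

lemma eps_empty_right (U : Finset (Fin n)) : eps U ∅ = 1 := by
  simp [eps]

lemma neg_one_pow_eq (c : ℕ) :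
    ((-1 : ℤ)) ^ c = if ((c : ℕ) : ZMod 2) = 0 then 1 else -1 := by
  induction c with
  | zero => simp
  | succ k ih =>
    rw [pow_succ, ih]
    push_cast
    rcases zmod2_em ((k : ℕ) : ZMod 2) with h | h <;> rw [h] <;> decide

/-- Character sum over the powerset. -/
lemma pow_sum (U S : Finset (Fin n)) :
    ∑ A ∈ S.powerset, eps U A = if U ∩ S = ∅ then 2 ^ S.card else 0 := by
  induction S using Finset.induction_on with
  | empty => simp [eps]
  | insert a S ha ih =>
    rw [Finset.sum_powerset_insert ha]
    by_cases hau : a ∈ U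
    · have key : ∀ A ∈ S.powerset, eps U (insert a A) = - eps U A := by
        intro A hA
        have haA : a ∉ A := fun h => ha (Finset.mem_powerset.1 hA h)
        have h1 : U ∩ insert a A = insert a (U ∩ A) := Finset.inter_insert_of_mem hau
        have h2 : a ∉ U ∩ A := fun h => haA (Finset.mem_inter.1 h).2
        unfold eps
        rw [h1, Finset.card_insert_of_notMem h2]
        push_cast
        rcases zmod2_em ((U ∩ A).card : ZMod 2) with h | h <;> rw [h] <;> decide
      rw [Finset.sum_congr rfl key, Finset.sum_neg_distrib]
      have hne : U ∩ insert a S ≠ ∅ := by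
        intro h
        have hmem : a ∈ U ∩ insert a S :=
          Finset.mem_inter.2 ⟨hau, Finset.mem_insert_self a S⟩
        rw [h] at hmem; exact absurd hmem (Finset.notMem_empty a)
      rw [if_neg hne]; ring
    · have key : ∀ A ∈ S.powerset, eps U (insert a A) = eps U A := by
        intro A _
        unfold eps
        rw [Finset.inter_insert_of_notMem hau]
      rw [Finset.sum_congr rfl key, ih]
      rw [Finset.inter_insert_of_notMem hau, Finset.card_insert_of_notMem ha]
      by_cases h : U ∩ S = ∅ <;> simp [h] <;> ring

/-- Transfer of sums between vectors and their supports. -/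
lemma sum_supp (p : Finset (Fin n) → Prop) [DecidablePred p]
    (q : (Fin n → ZMod 2) → Prop) [DecidablePred q]
    (hq : ∀ x, q x ↔ p (supp x))
    (g : Finset (Fin n) → ℤ) (F : (Fin n → ZMod 2) → ℤ)
    (hF : ∀ x, F x = g (supp x)) :
    ∑ x ∈ univ.filter q, F x = ∑ A ∈ univ.filter p, g A := by
  refine Finset.sum_nbij' (fun x => supp x) ind ?_ ?_ ?_ ?_ ?_ <;>
    simp [supp_ind, ind_supp, hq, hF]

lemma eps_union (U L T : Finset (Fin n)) (h : Disjoint L T) :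
    eps U (L ∪ T) = eps U L * eps U T := by
  have key : ∀ a b : ZMod 2, (if a + b = 0 then (1:ℤ) else -1)
      = (if a = 0 then (1:ℤ) else -1) * (if b = 0 then (1:ℤ) else -1) := by decide
  unfold eps
  rw [Finset.inter_union_distrib_left,
    Finset.card_union_of_disjoint
      (h.mono Finset.inter_subset_right Finset.inter_subset_right)]
  push_cast
  exact key _ _

/-- Character sum over the interval `[L, L ∪ B]`. -/
lemma eps_Icc (U L B : Finset (Fin n)) (hd : Disjoint L B) :
    ∑ A ∈ univ.filter (fun A : Finset (Fin n) => L ⊆ A ∧ A ⊆ L ∪ B), eps U A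
      = eps U L * (if U ∩ B = ∅ then 2 ^ B.card else 0) := by
  rw [← pow_sum U B, Finset.mul_sum]
  refine Finset.sum_nbij' (fun A => A \ L) (fun T => L ∪ T) ?_ ?_ ?_ ?_ ?_
  · intro A hA
    rw [Finset.mem_filter] at hA
    rw [Finset.mem_powerset]
    intro i hi
    rw [Finset.mem_sdiff] at hi
    rcases Finset.mem_union.1 (hA.2.2 hi.1) with h | h
    · exact absurd h hi.2
    · exact h
  · intro T hT
    rw [Finset.mem_powerset] at hT
    rw [Finset.mem_filter]
    exact ⟨Finset.mem_univ _, Finset.subset_union_left, Finset.union_subset_union_right hT⟩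
  · intro A hA
    rw [Finset.mem_filter] at hA
    exact Finset.union_sdiff_of_subset hA.2.1
  · intro T hT
    rw [Finset.mem_powerset] at hT
    exact Finset.union_sdiff_cancel_left (hd.mono_right hT)
  · intro A hA
    rw [Finset.mem_filter] at hA
    conv_lhs => rw [← Finset.union_sdiff_of_subset hA.2.1]
    exact eps_union U L (A \ L) Finset.disjoint_sdiff

/-- The central inclusion–exclusion computation. -/
lemma main_sum (L B₁ B₂ : Finset (Fin n)) (hd1 : Disjoint L B₁) (hd2 : Disjoint L B₂)
    (U : Finset (Fin n)) :
    ∑ A ∈ univ.filter (fun A : Finset (Fin n) =>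
        A.Nonempty ∧ (A ⊆ L ∨ L ⊆ A) ∧ (A ⊆ L ∪ B₁ ∨ A ⊆ L ∪ B₂)), eps U A
      = (if U ∩ L = ∅ then 2 ^ L.card else 0) - 1
        + eps U L * ((if U ∩ B₁ = ∅ then 2 ^ B₁.card else 0)
            + (if U ∩ B₂ = ∅ then 2 ^ B₂.card else 0)
            - (if U ∩ (B₁ ∩ B₂) = ∅ then 2 ^ (B₁ ∩ B₂).card else 0) - 1) := by
  classical
  set C0 := univ.filter (fun A : Finset (Fin n) => A ⊆ L) with hC0def
  set C1 := univ.filter (fun A : Finset (Fin n) => L ⊆ A ∧ A ⊆ L ∪ B₁) with hC1def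
  set C2 := univ.filter (fun A : Finset (Fin n) => L ⊆ A ∧ A ⊆ L ∪ B₂) with hC2def
  set C12 := univ.filter (fun A : Finset (Fin n) => L ⊆ A ∧ A ⊆ L ∪ (B₁ ∩ B₂)) with hC12def
  have hC0 : ∑ A ∈ C0, eps U A = (if U ∩ L = ∅ then 2 ^ L.card else 0) := by
    rw [show C0 = L.powerset by ext A; simp [hC0def]]
    exact pow_sum U L
  have hC1 : ∑ A ∈ C1, eps U A = eps U L * (if U ∩ B₁ = ∅ then 2 ^ B₁.card else 0) :=
    eps_Icc U L B₁ hd1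
  have hC2 : ∑ A ∈ C2, eps U A = eps U L * (if U ∩ B₂ = ∅ then 2 ^ B₂.card else 0) :=
    eps_Icc U L B₂ hd2
  have hC12 : ∑ A ∈ C12, eps U A
      = eps U L * (if U ∩ (B₁ ∩ B₂) = ∅ then 2 ^ (B₁ ∩ B₂).card else 0) :=
    eps_Icc U L (B₁ ∩ B₂) (hd1.mono_right Finset.inter_subset_left)
  have h12 : C1 ∩ C2 = C12 := by
    ext A
    simp only [hC1def, hC2def, hC12def, Finset.mem_inter, Finset.mem_filter,
      Finset.mem_univ, true_and]
    constructor
    · rintro ⟨⟨hL, h1⟩, ⟨_, h2⟩⟩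
      refine ⟨hL, ?_⟩
      rw [Finset.union_inter_distrib_left]
      exact Finset.subset_inter h1 h2
    · rintro ⟨hL, h⟩
      rw [Finset.union_inter_distrib_left, Finset.subset_inter_iff] at h
      exact ⟨⟨hL, h.1⟩, ⟨hL, h.2⟩⟩
  have h0i : C0 ∩ (C1 ∪ C2) = {L} := by
    ext A
    simp only [hC0def, hC1def, hC2def, Finset.mem_inter, Finset.mem_union, Finset.mem_filter,
      Finset.mem_univ, true_and, Finset.mem_singleton]
    constructor
    · rintro ⟨h0, (⟨hL, _⟩ | ⟨hL, _⟩)⟩ <;> exact Finset.Subset.antisymm h0 hL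
    · rintro rfl
      exact ⟨Finset.Subset.refl _, Or.inl ⟨Finset.Subset.refl _, Finset.subset_union_left⟩⟩
  have hQ : univ.filter (fun A : Finset (Fin n) =>
      A ⊆ L ∨ (L ⊆ A ∧ (A ⊆ L ∪ B₁ ∨ A ⊆ L ∪ B₂))) = C0 ∪ (C1 ∪ C2) := by
    ext A
    simp only [hC0def, hC1def, hC2def, Finset.mem_union, Finset.mem_filter,
      Finset.mem_univ, true_and]
    tauto
  have hPQ : univ.filter (fun A : Finset (Fin n) =>
        A.Nonempty ∧ (A ⊆ L ∨ L ⊆ A) ∧ (A ⊆ L ∪ B₁ ∨ A ⊆ L ∪ B₂))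
      = (univ.filter (fun A : Finset (Fin n) =>
          A ⊆ L ∨ (L ⊆ A ∧ (A ⊆ L ∪ B₁ ∨ A ⊆ L ∪ B₂)))).erase ∅ := by
    ext A
    simp only [Finset.mem_erase, Finset.mem_filter, Finset.mem_univ, true_and,
      Finset.nonempty_iff_ne_empty]
    have hsub1 : A ⊆ L → A ⊆ L ∪ B₁ := fun h => h.trans Finset.subset_union_left
    tauto
  have hmem : (∅ : Finset (Fin n)) ∈ univ.filter (fun A : Finset (Fin n) =>
      A ⊆ L ∨ (L ⊆ A ∧ (A ⊆ L ∪ B₁ ∨ A ⊆ L ∪ B₂))) := by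
    simp
  have hsum1 := Finset.sum_erase_add _ (eps U) hmem
  have hsum2 : ∑ A ∈ C0 ∪ (C1 ∪ C2), eps U A + ∑ A ∈ C0 ∩ (C1 ∪ C2), eps U A
      = ∑ A ∈ C0, eps U A + ∑ A ∈ C1 ∪ C2, eps U A := Finset.sum_union_inter
  have hsum3 : ∑ A ∈ C1 ∪ C2, eps U A + ∑ A ∈ C1 ∩ C2, eps U A
      = ∑ A ∈ C1, eps U A + ∑ A ∈ C2, eps U A := Finset.sum_union_inter
  rw [h0i] at hsum2
  rw [h12] at hsum3
  rw [Finset.sum_singleton] at hsum2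
  rw [eps_empty_right] at hsum1
  rw [hQ] at hsum1
  rw [hPQ, hQ]
  linear_combination hsum1 + hsum2 + hsum3 + hC0 + hC1 + hC2 - hC12

lemma sum_if_card {α : Type*} (s : Finset α) (p : α → Prop) [DecidablePred p] :
    ∑ x ∈ s, (if p x then (1:ℤ) else -1)
      = ((s.filter p).card : ℤ) - ((s.filter (fun x => ¬ p x)).card : ℤ) := by
  rw [← Finset.sum_filter_add_sum_filter_not s p]
  have h1 : ∑ x ∈ s.filter p, (if p x then (1:ℤ) else -1) = ((s.filter p).card : ℤ) := by
    rw [Finset.sum_congr rfl (fun x hx => if_pos (Finset.mem_filter.1 hx).2)]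
    simp
  have h2 : ∑ x ∈ s.filter (fun x => ¬ p x), (if p x then (1:ℤ) else -1)
      = -(((s.filter (fun x => ¬ p x)).card : ℤ)) := by
    rw [Finset.sum_congr rfl (fun x hx => if_neg (Finset.mem_filter.1 hx).2)]
    simp
  rw [h1, h2]; ring

lemma mem_lowSet {m : ℕ} (i : Fin n) : i ∈ lowSet n m ↔ (i : ℕ) < m := by
  simp [lowSet]

lemma lowSet_card {m : ℕ} (hmn : m ≤ n) : (lowSet n m).card = m := by
  have himg : (lowSet n m).image Fin.val = Finset.range m := by
    ext a
    simp only [Finset.mem_image, Finset.mem_range, lowSet, Finset.mem_filter,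
      Finset.mem_univ, true_and]
    constructor
    · rintro ⟨i, hi, rfl⟩; exact hi
    · intro ha; exact ⟨⟨a, lt_of_lt_of_le ha hmn⟩, ha, rfl⟩
  have hinj := Finset.card_image_of_injective (lowSet n m) Fin.val_injective
  rw [himg, Finset.card_range] at hinj
  exact hinj.symm

lemma dc_iff {m : ℕ} (A : Finset (Fin n)) :
    HDownClosed n m A ↔ (A ⊆ lowSet n m ∨ lowSet n m ⊆ A) := by
  constructor
  · intro h
    by_cases hsub : A ⊆ lowSet n m
    · exact Or.inl hsub
    · right
      obtain ⟨j, hjA, hj⟩ : ∃ j ∈ A, ¬ (j : ℕ) < m := by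
        by_contra hc
        push_neg at hc
        exact hsub fun i hi => (mem_lowSet i).2 (hc i hi)
      intro i hi
      rw [mem_lowSet] at hi
      exact h i j (Or.inr ⟨hi, le_of_not_gt hj⟩) hjA
  · rintro (h | h) i j hij hjA
    · rcases hij with rfl | ⟨hi, hj⟩
      · exact hjA
      · have := (mem_lowSet j).1 (h hjA)
        omega
    · rcases hij with rfl | ⟨hi, hj⟩
      · exact hjA
      · exact h ((mem_lowSet i).2 hi)

end Stmt11Aux


open Stmt11Aux in
/-- **Theorem 5.7(2).**  Let `1 ≤ m < n`, let `B₁, B₂ ⊆ [n] ∖ [m]` be nonempty and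
incomparable, and let `f` be the indicator of the nonempty down-closed subsets of
`ℍ(m,n)` contained in `[m]∪B₁` or in `[m]∪B₂`.  Then: `wt(c_f(0,0)) = 0`;
`wt(c_f(0,u)) = 2^{n−1}` for `u ≠ 0`;
`wt(c_f(1,0)) = 2^m − 2 + 2^{|B₁|} + 2^{|B₂|} − 2^{|B₁∩B₂|}`; and for nonzero
`u = (v,w)`,
`wt(c_f(1,u)) = 2^{n−1} − 1 + 2^m·χ₀ + (−1)^{wt(v)}·(2^{|B₁|}χ₁ + 2^{|B₂|}χ₂ − 2^{|B₁∩B₂|}χ₁₂ − 1)`. -/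
theorem stmt_11 (n m : ℕ) (hm : 1 ≤ m) (hmn : m < n)
    (B₁ B₂ : Finset (Fin n))
    (hB₁ne : B₁.Nonempty) (hB₂ne : B₂.Nonempty)
    (hB₁ : ∀ j ∈ B₁, m ≤ (j : ℕ)) (hB₂ : ∀ j ∈ B₂, m ≤ (j : ℕ))
    (h12 : ¬ B₁ ⊆ B₂) (h21 : ¬ B₂ ⊆ B₁)
    (f : (Fin n → ZMod 2) → ZMod 2)
    (hf : ∀ x, f x = 1 ↔
      ((supp x).Nonempty ∧ HDownClosed n m (supp x) ∧
        (supp x ⊆ lowSet n m ∪ B₁ ∨ supp x ⊆ lowSet n m ∪ B₂))) :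
    wtF f 0 0 = 0
    ∧ (∀ u : Fin n → ZMod 2, u ≠ 0 → wtF f 0 u = 2 ^ (n - 1))
    ∧ (wtF f 1 0 : ℤ) = 2 ^ m - 2 + 2 ^ B₁.card + 2 ^ B₂.card - 2 ^ (B₁ ∩ B₂).card
    ∧ ∀ u : Fin n → ZMod 2, u ≠ 0 →
        (wtF f 1 u : ℤ) =
          2 ^ (n - 1) - 1
          + 2 ^ m * (if ∀ i : Fin n, (i : ℕ) < m → u i = 0 then 1 else 0)
          + (-1) ^ (wtLow n m u) *
              (2 ^ B₁.card * (if ∀ j ∈ B₁, u j = 0 then 1 else 0)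
               + 2 ^ B₂.card * (if ∀ j ∈ B₂, u j = 0 then 1 else 0)
               - 2 ^ (B₁ ∩ B₂).card * (if ∀ j ∈ B₁ ∩ B₂, u j = 0 then 1 else 0)
               - 1) := by
  -- classical
  set L := lowSet n m with hL
  have hd1 : Disjoint L B₁ := by
    rw [Finset.disjoint_left]
    intro i hiL hiB
    rw [hL, mem_lowSet] at hiL
    have := hB₁ i hiB
    omega
  have hd2 : Disjoint L B₂ := by
    rw [Finset.disjoint_left]
    intro i hiL hiB
    rw [hL, mem_lowSet] at hiL
    have := hB₂ i hiB
    omega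
  have hf' : ∀ x, f x = 1 ↔
      ((supp x).Nonempty ∧ (supp x ⊆ L ∨ L ⊆ supp x)
        ∧ (supp x ⊆ L ∪ B₁ ∨ supp x ⊆ L ∪ B₂)) := by
    intro x
    rw [hf x, dc_iff]
  have hfx0 : ∀ x : Fin n → ZMod 2, f x = 1 → x ≠ 0 := by
    intro x hx h0
    rw [h0] at hx
    have h1 := ((hf' 0).1 hx).1
    rw [supp_zero] at h1
    exact absurd h1 (by simp)
  -- the master character-sum identity
  have master : ∀ u : Fin n → ZMod 2,
      ((univ.filter (fun x : Fin n → ZMod 2 => f x = 1 ∧ ip u x = 0)).card : ℤ)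
        - ((univ.filter (fun x : Fin n → ZMod 2 => f x = 1 ∧ ip u x = 1)).card : ℤ)
      = (if supp u ∩ L = ∅ then 2 ^ m else 0) - 1
        + eps (supp u) L * ((if supp u ∩ B₁ = ∅ then 2 ^ B₁.card else 0)
            + (if supp u ∩ B₂ = ∅ then 2 ^ B₂.card else 0)
            - (if supp u ∩ (B₁ ∩ B₂) = ∅ then 2 ^ (B₁ ∩ B₂).card else 0) - 1) := by
    intro u
    have h1 : ∑ x ∈ univ.filter (fun x : Fin n → ZMod 2 => f x = 1),
        (if ip u x = 0 then (1:ℤ) else -1)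
        = ((univ.filter (fun x : Fin n → ZMod 2 => f x = 1 ∧ ip u x = 0)).card : ℤ)
          - ((univ.filter (fun x : Fin n → ZMod 2 => f x = 1 ∧ ip u x = 1)).card : ℤ) := by
      rw [sum_if_card, Finset.filter_filter, Finset.filter_filter]
      have he : univ.filter (fun x : Fin n → ZMod 2 => f x = 1 ∧ ¬ ip u x = 0)
          = univ.filter (fun x : Fin n → ZMod 2 => f x = 1 ∧ ip u x = 1) :=
        Finset.filter_congr fun x _ => by rw [zmod2_ne]
      rw [he]
    have h2 : ∑ x ∈ univ.filter (fun x : Fin n → ZMod 2 => f x = 1),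
        (if ip u x = 0 then (1:ℤ) else -1)
        = ∑ A ∈ univ.filter (fun A : Finset (Fin n) =>
            A.Nonempty ∧ (A ⊆ L ∨ L ⊆ A) ∧ (A ⊆ L ∪ B₁ ∨ A ⊆ L ∪ B₂)),
            eps (supp u) A := by
      refine sum_supp _ _ (fun x => hf' x) _ _ (fun x => ?_)
      unfold eps
      rw [ip_card u x]
    rw [← h1, h2, main_sum L B₁ B₂ hd1 hd2 (supp u),
      show L.card = m from lowSet_card (le_of_lt hmn)]
  -- count of x with ip u x = 1, for u ≠ 0
  have hN1 : ∀ u : Fin n → ZMod 2, u ≠ 0 →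
      (univ.filter (fun x : Fin n → ZMod 2 => ip u x = 1)).card = 2 ^ (n - 1) := by
    intro u hu
    have hsupp : supp u ≠ ∅ := fun h => hu ((supp_eq_empty u).1 h)
    have hs : ∑ x ∈ (univ : Finset (Fin n → ZMod 2)),
        (if ip u x = 0 then (1:ℤ) else -1) = 0 := by
      calc ∑ x ∈ (univ : Finset (Fin n → ZMod 2)), (if ip u x = 0 then (1:ℤ) else -1)
          = ∑ x ∈ univ.filter (fun _ : Fin n → ZMod 2 => True),
              (if ip u x = 0 then (1:ℤ) else -1) := by
            simp
        _ = ∑ A ∈ univ.filter (fun _ : Finset (Fin n) => True), eps (supp u) A := by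
            refine sum_supp (fun _ : Finset (Fin n) => True) (fun _ : Fin n → ZMod 2 => True)
              (fun x => Iff.rfl) (eps (supp u)) _ (fun x => ?_)
            unfold eps
            rw [ip_card u x]
        _ = 0 := by
            rw [show (univ.filter (fun _ : Finset (Fin n) => True))
                = (univ : Finset (Fin n)).powerset by simp, pow_sum,
              Finset.inter_univ, if_neg hsupp]
    have h3 := sum_if_card (univ : Finset (Fin n → ZMod 2)) (fun x => ip u x = 0)
    rw [hs] at h3
    have h4 : univ.filter (fun x : Fin n → ZMod 2 => ¬ ip u x = 0)
        = univ.filter (fun x : Fin n → ZMod 2 => ip u x = 1) :=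
      Finset.filter_congr fun x _ => zmod2_ne _
    have h5 := Finset.card_filter_add_card_filter_not
      (s := (univ : Finset (Fin n → ZMod 2))) (p := fun x : Fin n → ZMod 2 => ip u x = 0)
    have h6 : (univ : Finset (Fin n → ZMod 2)).card = 2 ^ n := by
      rw [Finset.card_univ, Fintype.card_fun, Fintype.card_fin]
      norm_num
    have h2n : 2 ^ n = 2 * 2 ^ (n - 1) := by
      rw [← pow_succ']
      congr 1
      omega
    rw [h4] at h3 h5
    omega
  refine ⟨?_, ?_, ?_, ?_⟩
  · -- wtF f 0 0 = 0
    unfold wtF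
    rw [Finset.filter_false_of_mem, Finset.card_empty]
    intro x _
    simp [ip_zero_left]
  · -- wtF f 0 u = 2^(n-1)
    intro u hu
    unfold wtF
    have he : univ.filter (fun x : Fin n → ZMod 2 => x ≠ 0 ∧ 0 * f x + ip u x = 1)
        = univ.filter (fun x : Fin n → ZMod 2 => ip u x = 1) := by
      refine Finset.filter_congr fun x _ => ?_
      rw [zero_mul, zero_add]
      constructor
      · exact And.right
      · intro h
        refine ⟨fun h0 => ?_, h⟩
        rw [h0, ip_zero_right] at h
        exact absurd h (by decide)
    rw [he]
    exact hN1 u hu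
  · -- wtF f 1 0
    have hm0a : univ.filter (fun x : Fin n → ZMod 2 => f x = 1 ∧ ip 0 x = 0)
        = univ.filter (fun x : Fin n → ZMod 2 => f x = 1) := by
      refine Finset.filter_congr fun x _ => ?_
      rw [ip_zero_left]
      simp
    have hm0b : univ.filter (fun x : Fin n → ZMod 2 => f x = 1 ∧ ip 0 x = 1) = ∅ := by
      refine Finset.filter_false_of_mem fun x _ => ?_
      rw [ip_zero_left]
      rintro ⟨-, h⟩
      exact absurd h (by decide)
    have hM := master 0
    rw [hm0a, hm0b] at hM
    simp only [supp_zero, Finset.empty_inter, Finset.card_empty, eps_empty_left,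
      if_pos rfl, Nat.cast_zero] at hM
    have hw : univ.filter (fun x : Fin n → ZMod 2 => x ≠ 0 ∧ 1 * f x + ip 0 x = 1)
        = univ.filter (fun x : Fin n → ZMod 2 => f x = 1) := by
      refine Finset.filter_congr fun x _ => ?_
      rw [ip_zero_left, one_mul, add_zero]
      exact ⟨And.right, fun h => ⟨hfx0 x h, h⟩⟩
    unfold wtF
    rw [hw]
    push_cast at hM ⊢
    linarith
  · -- wtF f 1 u for u ≠ 0
    intro u hu
    have hu1 : univ.filter (fun x : Fin n → ZMod 2 => x ≠ 0 ∧ 1 * f x + ip u x = 1)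
        = univ.filter (fun x : Fin n → ZMod 2 => f x = 1 ∧ ip u x = 0)
          ∪ univ.filter (fun x : Fin n → ZMod 2 => f x ≠ 1 ∧ ip u x = 1) := by
      ext x
      simp only [Finset.mem_filter, Finset.mem_union, Finset.mem_univ, true_and, one_mul]
      constructor
      · rintro ⟨hx0, hsum⟩
        rcases zmod2_em (f x) with hfx | hfx <;> rcases zmod2_em (ip u x) with hix | hix
        · rw [hfx, hix] at hsum; exact absurd hsum (by decide)
        · right; exact ⟨by rw [hfx]; decide, hix⟩
        · left; exact ⟨hfx, hix⟩
        · rw [hfx, hix] at hsum; exact absurd hsum (by decide)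
      · rintro (⟨h1, h2⟩ | ⟨h1, h2⟩)
        · exact ⟨hfx0 x h1, by rw [h1, h2]; decide⟩
        · refine ⟨fun h0 => ?_, ?_⟩
          · rw [h0, ip_zero_right] at h2; exact absurd h2 (by decide)
          · rcases zmod2_em (f x) with hfx | hfx
            · rw [hfx, h2]; decide
            · exact absurd hfx h1
    have hdisj1 : Disjoint
        (univ.filter (fun x : Fin n → ZMod 2 => f x = 1 ∧ ip u x = 0))
        (univ.filter (fun x : Fin n → ZMod 2 => f x ≠ 1 ∧ ip u x = 1)) := by
      rw [Finset.disjoint_left]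
      intro x hx1 hx2
      rw [Finset.mem_filter] at hx1 hx2
      exact hx2.2.1 hx1.2.1
    have hu2 : univ.filter (fun x : Fin n → ZMod 2 => ip u x = 1)
        = univ.filter (fun x : Fin n → ZMod 2 => f x = 1 ∧ ip u x = 1)
          ∪ univ.filter (fun x : Fin n → ZMod 2 => f x ≠ 1 ∧ ip u x = 1) := by
      ext x
      simp only [Finset.mem_filter, Finset.mem_union, Finset.mem_univ, true_and]
      constructor
      · intro h
        by_cases hfx : f x = 1
        · exact Or.inl ⟨hfx, h⟩
        · exact Or.inr ⟨hfx, h⟩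
      · rintro (⟨-, h⟩ | ⟨-, h⟩) <;> exact h
    have hdisj2 : Disjoint
        (univ.filter (fun x : Fin n → ZMod 2 => f x = 1 ∧ ip u x = 1))
        (univ.filter (fun x : Fin n → ZMod 2 => f x ≠ 1 ∧ ip u x = 1)) := by
      rw [Finset.disjoint_left]
      intro x hx1 hx2
      rw [Finset.mem_filter] at hx1 hx2
      exact hx2.2.1 hx1.2.1
    have e1 : wtF f 1 u
        = (univ.filter (fun x : Fin n → ZMod 2 => f x = 1 ∧ ip u x = 0)).card
          + (univ.filter (fun x : Fin n → ZMod 2 => f x ≠ 1 ∧ ip u x = 1)).card := by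
      unfold wtF
      rw [hu1]
      exact Finset.card_union_of_disjoint hdisj1
    have e2 : 2 ^ (n - 1)
        = (univ.filter (fun x : Fin n → ZMod 2 => f x = 1 ∧ ip u x = 1)).card
          + (univ.filter (fun x : Fin n → ZMod 2 => f x ≠ 1 ∧ ip u x = 1)).card := by
      rw [← hN1 u hu, hu2]
      exact Finset.card_union_of_disjoint hdisj2
    have iff0 : supp u ∩ L = ∅ ↔ (∀ i : Fin n, (i : ℕ) < m → u i = 0) := by
      rw [Finset.eq_empty_iff_forall_notMem]
      constructor
      · intro h i him
        by_contra hne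
        exact h i (Finset.mem_inter.2 ⟨by simp [supp, hne], by rw [hL]; exact (mem_lowSet i).2 him⟩)
      · intro h i hi
        rw [Finset.mem_inter] at hi
        have h1 : u i ≠ 0 := by simpa [supp] using hi.1
        rw [hL, mem_lowSet] at hi
        exact h1 (h i hi.2)
    have iffB : ∀ B : Finset (Fin n), (supp u ∩ B = ∅ ↔ ∀ j ∈ B, u j = 0) := by
      intro B
      rw [Finset.eq_empty_iff_forall_notMem]
      constructor
      · intro h j hj
        by_contra hne
        exact h j (Finset.mem_inter.2 ⟨by simp [supp, hne], hj⟩)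
      · intro h j hjmem
        rw [Finset.mem_inter] at hjmem
        have h1 : u j ≠ 0 := by simpa [supp] using hjmem.1
        exact h1 (h j hjmem.2)
    have heps : eps (supp u) L = (-1 : ℤ) ^ (wtLow n m u) := by
      rw [neg_one_pow_eq]
      have hset : supp u ∩ L = univ.filter (fun i : Fin n => (i : ℕ) < m ∧ u i ≠ 0) := by
        ext i
        rw [hL]
        simp only [Finset.mem_inter, Finset.mem_filter, Finset.mem_univ, true_and,
          mem_lowSet, supp]
        tauto
      unfold eps wtLow
      rw [hset]
    have g0 : (if supp u ∩ L = ∅ then (2:ℤ)^m else 0)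
        = 2^m * (if ∀ i : Fin n, (i : ℕ) < m → u i = 0 then 1 else 0) := by
      rw [if_congr iff0 rfl rfl]
      by_cases h : ∀ i : Fin n, (i : ℕ) < m → u i = 0 <;> simp [h]
    have g1 : (if supp u ∩ B₁ = ∅ then (2:ℤ)^B₁.card else 0)
        = 2^B₁.card * (if ∀ j ∈ B₁, u j = 0 then 1 else 0) := by
      rw [if_congr (iffB B₁) rfl rfl]
      by_cases h : ∀ j ∈ B₁, u j = 0 <;> simp [h]
    have g2 : (if supp u ∩ B₂ = ∅ then (2:ℤ)^B₂.card else 0)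
        = 2^B₂.card * (if ∀ j ∈ B₂, u j = 0 then 1 else 0) := by
      rw [if_congr (iffB B₂) rfl rfl]
      by_cases h : ∀ j ∈ B₂, u j = 0 <;> simp [h]
    have g12 : (if supp u ∩ (B₁ ∩ B₂) = ∅ then (2:ℤ)^(B₁ ∩ B₂).card else 0)
        = 2^(B₁ ∩ B₂).card * (if ∀ j ∈ B₁ ∩ B₂, u j = 0 then 1 else 0) := by
      rw [if_congr (iffB (B₁ ∩ B₂)) rfl rfl]
      by_cases h : ∀ j ∈ B₁ ∩ B₂, u j = 0 <;> simp [h]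
    have hM := master u
    rw [g0, g1, g2, g12, heps] at hM
    have e1' := congrArg (Nat.cast : ℕ → ℤ) e1
    have e2' := congrArg (Nat.cast : ℕ → ℤ) e2
    push_cast at e1' e2'
    linarith [hM, e1', e2']
end

section
/- Let 3 ≤ m ≤ n − 1 (i.e., 1 < m − 1 ≤ n − 2) and let B ⊆ [n]∖[m] with |B| = 1. Set D = {x ∈ 𝔽₂ⁿ : supp(x) is not a down-closed subset of ℍ(m,n) contained in [m] ∪ B}. Then the code C_D is a binary Griesmer code with parameters [2ⁿ − 1 − 2^m, n, 2^{n−1} − 1 − 2^{m−1}]: its length is |D| = 2ⁿ − 1 − 2^m; the map u ↦ c_{D,u} is injective (so C_D has 2ⁿ codewords and dimension n); the minimum weight of a nonzero codeword is d = 2^{n−1} − 1 − 2^{m−1}; and Σ_{i=0}^{n−1} ⌈d/2^i⌉ = 2ⁿ − 1 − 2^m, i.e., the Griesmer bound is met with equality. -/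
open Finset

-- ===== auxiliary lemmas =====

lemma zmod2_ne_zero : ∀ {a : ZMod 2}, a ≠ 0 → a = 1 := by decide

lemma supp_inj {n : ℕ} {x y : Fin n → ZMod 2} (h : supp x = supp y) : x = y := by
  funext i
  have hx := Finset.ext_iff.mp h i
  simp only [supp, mem_filter, mem_univ, true_and] at hx
  revert hx
  have : ∀ a b : ZMod 2, ((a ≠ 0) ↔ (b ≠ 0)) → a = b := by decide
  exact this _ _

lemma ip_add_right {n : ℕ} (u x y : Fin n → ZMod 2) : ip u (x + y) = ip u x + ip u y := by
  simp [ip, mul_add, Finset.sum_add_distrib]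

lemma ip_add_left {n : ℕ} (u v x : Fin n → ZMod 2) : ip (u + v) x = ip u x + ip v x := by
  simp [ip, add_mul, Finset.sum_add_distrib]

/-- indicator vector of a single coordinate -/
def sing {n : ℕ} (i₀ : Fin n) : Fin n → ZMod 2 := fun j => if j = i₀ then 1 else 0

lemma ip_single {n : ℕ} (u : Fin n → ZMod 2) (i₀ : Fin n) :
    ip u (fun j => if j = i₀ then 1 else 0) = u i₀ := by
  rw [ip, Finset.sum_eq_single i₀]
  · simp
  · intro b _ hb; simp [hb]
  · simp

lemma ip_single_left {n : ℕ} (x : Fin n → ZMod 2) (i₀ : Fin n) :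
    ip (sing i₀) x = x i₀ := by
  rw [ip, Finset.sum_eq_single i₀]
  · simp [sing]
  · intro b _ hb; simp [sing, hb]
  · simp

/-- the indicator vector of `[m] ∪ {b}` -/
def xbvec (n m : ℕ) (b : Fin n) : Fin n → ZMod 2 :=
  fun i => if (i : ℕ) < m ∨ i = b then 1 else 0

lemma card_supp_subset {n : ℕ} (s : Finset (Fin n)) :
    (univ.filter fun x : Fin n → ZMod 2 => ∀ i ∉ s, x i = 0).card = 2 ^ s.card := by
  have h : (univ.filter fun x : Fin n → ZMod 2 => ∀ i ∉ s, x i = 0)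
      = Fintype.piFinset (fun i => if i ∈ s then (univ : Finset (ZMod 2)) else {0}) := by
    ext x
    simp only [mem_filter, mem_univ, true_and, Fintype.mem_piFinset]
    constructor
    · intro h i; by_cases hi : i ∈ s <;> simp [hi, h i]
    · intro h i hi; have := h i; simp [hi] at this; exact this
  rw [h, Fintype.card_piFinset]
  have h2 : ∀ i : Fin n, ((if i ∈ s then (univ : Finset (ZMod 2)) else {0}).card) = if i ∈ s then 2 else 1 := by
    intro i; split <;> simp
  rw [Finset.prod_congr rfl (fun i _ => h2 i), Finset.prod_ite_mem, Finset.univ_inter,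
    Finset.prod_const]

lemma card_ip_one {n : ℕ} (s : Finset (Fin n)) (u : Fin n → ZMod 2)
    (i₀ : Fin n) (hi₀ : i₀ ∈ s) (hu : u i₀ ≠ 0) :
    (univ.filter fun x : Fin n → ZMod 2 => (∀ i ∉ s, x i = 0) ∧ ip u x = 1).card
      = 2 ^ (s.card - 1) := by
  obtain ⟨e, he⟩ : ∃ e : Fin n → ZMod 2, e = fun j => if j = i₀ then 1 else 0 := ⟨_, rfl⟩
  have hipe : ∀ x, ip u (x + e) = ip u x + 1 := by
    intro x; rw [ip_add_right, he, ip_single, zmod2_ne_zero hu]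
  have hmem : ∀ x : Fin n → ZMod 2, (∀ i ∉ s, x i = 0) → ∀ i ∉ s, (x + e) i = 0 := by
    intro x hx i hi
    have hne : i ≠ i₀ := fun h => hi (h ▸ hi₀)
    simp [he, hx i hi, hne]
  have hinv : ∀ x : Fin n → ZMod 2, (x + e) + e = x := by
    intro x; funext j
    have h2 : ∀ a b : ZMod 2, a + b + b = a := by decide
    simp [Pi.add_apply, h2]
  have hbij : (univ.filter fun x : Fin n → ZMod 2 => (∀ i ∉ s, x i = 0) ∧ ip u x = 1).card
      = (univ.filter fun x : Fin n → ZMod 2 => (∀ i ∉ s, x i = 0) ∧ ip u x = 0).card := by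
    apply Finset.card_bij' (fun x _ => x + e) (fun x _ => x + e)
    · intro x hx
      simp only [mem_filter, mem_univ, true_and] at hx ⊢
      refine ⟨hmem x hx.1, ?_⟩
      rw [hipe, hx.2]; decide
    · intro x hx
      simp only [mem_filter, mem_univ, true_and] at hx ⊢
      refine ⟨hmem x hx.1, ?_⟩
      rw [hipe, hx.2]; decide
    · intro x _; exact hinv x
    · intro x _; exact hinv x
  have hunion : (univ.filter fun x : Fin n → ZMod 2 => (∀ i ∉ s, x i = 0) ∧ ip u x = 1)
      ∪ (univ.filter fun x : Fin n → ZMod 2 => (∀ i ∉ s, x i = 0) ∧ ip u x = 0)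
      = (univ.filter fun x : Fin n → ZMod 2 => ∀ i ∉ s, x i = 0) := by
    ext x
    simp only [Finset.mem_union, mem_filter, mem_univ, true_and]
    have h01 : ip u x = 1 ∨ ip u x = 0 :=
      (show ∀ a : ZMod 2, a = 1 ∨ a = 0 by decide) (ip u x)
    tauto
  have hdisj : Disjoint
      (univ.filter fun x : Fin n → ZMod 2 => (∀ i ∉ s, x i = 0) ∧ ip u x = 1)
      (univ.filter fun x : Fin n → ZMod 2 => (∀ i ∉ s, x i = 0) ∧ ip u x = 0) := by
    rw [Finset.disjoint_left]
    intro x h1 h0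
    simp only [mem_filter, mem_univ, true_and] at h1 h0
    rw [h1.2] at h0
    exact absurd h0.2 (by decide)
  have hsplit := Finset.card_union_of_disjoint hdisj
  rw [hunion, card_supp_subset] at hsplit
  have hbij2 : (univ.filter fun x : Fin n → ZMod 2 => (∀ i ∉ s, x i = 0) ∧ ip u x = 1).card
      = (univ.filter fun x : Fin n → ZMod 2 => (∀ i ∉ s, x i = 0) ∧ ip u x = 0).card := hbij
  have hsplit2 : (univ.filter fun x : Fin n → ZMod 2 => (∀ i ∉ s, x i = 0) ∧ ip u x = 1).card
      + (univ.filter fun x : Fin n → ZMod 2 => (∀ i ∉ s, x i = 0) ∧ ip u x = 0).card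
      = 2 ^ s.card := hsplit.symm
  clear hunion hdisj hbij hsplit
  have hc : 0 < s.card := Finset.card_pos.mpr ⟨i₀, hi₀⟩
  have hcc : s.card - 1 + 1 = s.card := Nat.succ_pred_eq_of_pos hc
  have h3 : 2 ^ s.card = 2 * 2 ^ (s.card - 1) := by
    rw [← hcc, pow_succ, mul_comm, Nat.add_sub_cancel]
  rw [hbij2] at hsplit2
  have h4 : 2 * (univ.filter fun x : Fin n → ZMod 2 => (∀ i ∉ s, x i = 0) ∧ ip u x = 0).card
      = 2 * 2 ^ (s.card - 1) := by rw [← h3, ← hsplit2, two_mul]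
  rw [hbij2]
  exact Nat.eq_of_mul_eq_mul_left (by norm_num) h4

lemma card_ip_zero_case {n : ℕ} (s : Finset (Fin n)) (u : Fin n → ZMod 2)
    (hu : ∀ i ∈ s, u i = 0) :
    (univ.filter fun x : Fin n → ZMod 2 => (∀ i ∉ s, x i = 0) ∧ ip u x = 1).card = 0 := by
  rw [Finset.card_eq_zero, Finset.filter_eq_empty_iff]
  intro x _
  rintro ⟨hx, hip⟩
  have h0 : ip u x = 0 := Finset.sum_eq_zero (fun i _ => by
    by_cases hi : i ∈ s
    · simp [hu i hi]
    · simp [hx i hi])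
  rw [h0] at hip; exact absurd hip (by decide)

lemma pow_sum_desc : ∀ (k t : ℕ), k ≤ t → ∑ i ∈ range k, 2 ^ (t - 1 - i) = 2 ^ t - 2 ^ (t - k) := by
  intro k
  induction k with
  | zero => intro t _; simp
  | succ k ih =>
    intro t ht
    rw [Finset.sum_range_succ, ih t (by omega)]
    have h1 : (2:ℕ) ^ (t - k) = 2 * 2 ^ (t - (k+1)) := by
      rw [← pow_succ']; congr 1; omega
    have h2 : (2:ℕ) ^ (t - k) ≤ 2 ^ t := Nat.pow_le_pow_right (by norm_num) (by omega)
    have h3 : t - 1 - k = t - (k+1) := by omega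
    rw [h3]
    omega

lemma griesmer_sum (n m : ℕ) (hm : 3 ≤ m) (hmn : m < n) :
    ∑ i ∈ Finset.range n, (2 ^ (n - 1) - 1 - 2 ^ (m - 1) + 2 ^ i - 1) / 2 ^ i
      = 2 ^ n - 1 - 2 ^ m := by
  have hterm_top : ∀ i, m ≤ i → i < n → (2 ^ (n - 1) - 1 - 2 ^ (m - 1) + 2 ^ i - 1) / 2 ^ i
      = 2 ^ (n - 1 - i) := by
    intro i hmi hin
    have hca : (2:ℕ) ^ (n - 1) = 2 ^ i * 2 ^ (n - 1 - i) := by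
      rw [← pow_add]; congr 1; omega
    have hqc : (2:ℕ) ^ (m - 1) * 2 ≤ 2 ^ i := by
      rw [mul_comm, ← pow_succ']
      exact Nat.pow_le_pow_right (by norm_num) (by omega)
    have hq4 : (4:ℕ) ≤ 2 ^ (m - 1) := by
      calc (4:ℕ) = 2 ^ 2 := by norm_num
      _ ≤ 2 ^ (m - 1) := Nat.pow_le_pow_right (by norm_num) (by omega)
    have hqa : (2:ℕ) ^ (m - 1) * 2 ≤ 2 ^ (n - 1) := by
      rw [mul_comm, ← pow_succ']
      exact Nat.pow_le_pow_right (by norm_num) (by omega)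
    have key : 2 ^ (n - 1) - 1 - 2 ^ (m - 1) + 2 ^ i - 1
        = 2 ^ i * 2 ^ (n - 1 - i) + (2 ^ i - 2 ^ (m - 1) - 2) :=
      (show ∀ A B C CA : ℕ, A = CA → B * 2 ≤ C → 4 ≤ B → B * 2 ≤ A →
          A - 1 - B + C - 1 = CA + (C - B - 2) by intros; omega)
        _ _ _ _ hca hqc hq4 hqa
    have hrlt : 2 ^ i - 2 ^ (m - 1) - 2 < 2 ^ i :=
      (show ∀ B C : ℕ, 4 ≤ B → B * 2 ≤ C → C - B - 2 < C by intros; omega) _ _ hq4 hqc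
    rw [key, Nat.mul_add_div (by positivity : (0:ℕ) < 2 ^ i),
      Nat.div_eq_of_lt hrlt, add_zero]
  have hterm_mid : ∀ i, 1 ≤ i → i < m → (2 ^ (n - 1) - 1 - 2 ^ (m - 1) + 2 ^ i - 1) / 2 ^ i
      = 2 ^ (n - 1 - i) - 2 ^ (m - 1 - i) := by
    intro i h1i him
    have hab : (2:ℕ) ^ (m - 1 - i) ≤ 2 ^ (n - 1 - i) := Nat.pow_le_pow_right (by norm_num) (by omega)
    have hca : (2:ℕ) ^ (n - 1) = 2 ^ i * 2 ^ (n - 1 - i) := by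
      rw [← pow_add]; congr 1; omega
    have hcb : (2:ℕ) ^ (m - 1) = 2 ^ i * 2 ^ (m - 1 - i) := by
      rw [← pow_add]; congr 1; omega
    have hsp : (2:ℕ) ^ i * 2 ^ (n - 1 - i)
        = 2 ^ i * (2 ^ (n - 1 - i) - 2 ^ (m - 1 - i)) + 2 ^ i * 2 ^ (m - 1 - i) := by
      rw [← Nat.mul_add, Nat.sub_add_cancel hab]
    have hA : (2:ℕ) ^ (n - 1)
        = 2 ^ i * (2 ^ (n - 1 - i) - 2 ^ (m - 1 - i)) + 2 ^ (m - 1) := by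
      rw [hca, hsp, ← hcb]
    have h2c : (2:ℕ) ≤ 2 ^ i := by
      calc (2:ℕ) = 2 ^ 1 := by norm_num
      _ ≤ 2 ^ i := Nat.pow_le_pow_right (by norm_num) h1i
    have hlt : (2:ℕ) ^ (m - 1) < 2 ^ (n - 1) := Nat.pow_lt_pow_right (by norm_num) (by omega)
    have key : 2 ^ (n - 1) - 1 - 2 ^ (m - 1) + 2 ^ i - 1
        = 2 ^ i * (2 ^ (n - 1 - i) - 2 ^ (m - 1 - i)) + (2 ^ i - 2) :=
      (show ∀ A B C Q : ℕ, A = Q + B → 2 ≤ C → B < A →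
          A - 1 - B + C - 1 = Q + (C - 2) by intros; omega)
        _ _ _ _ hA h2c hlt
    have hrlt : 2 ^ i - 2 < 2 ^ i :=
      (show ∀ C : ℕ, 2 ≤ C → C - 2 < C by intros; omega) _ h2c
    rw [key, Nat.mul_add_div (by positivity : (0:ℕ) < 2 ^ i),
      Nat.div_eq_of_lt hrlt, add_zero]
  -- split the sum
  rw [Finset.range_eq_Ico, ← Finset.sum_Ico_consecutive _ (Nat.zero_le m) (le_of_lt hmn)]
  rw [Finset.sum_eq_sum_Ico_succ_bot (by omega : 0 < m)]
  have e0 : (2 ^ (n - 1) - 1 - 2 ^ (m - 1) + 2 ^ 0 - 1) / 2 ^ 0 = 2 ^ (n - 1) - 1 - 2 ^ (m - 1) := by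
    simp
  have emid : ∑ i ∈ Finset.Ico 1 m, (2 ^ (n - 1) - 1 - 2 ^ (m - 1) + 2 ^ i - 1) / 2 ^ i
      = (2 ^ (n - 1) - 2 ^ (n - m)) - (2 ^ (m - 1) - 1) := by
    have c1 : ∑ i ∈ Finset.Ico 1 m, (2 ^ (n - 1) - 1 - 2 ^ (m - 1) + 2 ^ i - 1) / 2 ^ i
        = ∑ i ∈ Finset.Ico 1 m, (2 ^ (n - 1 - i) - 2 ^ (m - 1 - i)) :=
      Finset.sum_congr rfl (fun i hi => by
        rw [Finset.mem_Ico] at hi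
        exact hterm_mid i hi.1 hi.2)
    rw [c1, Finset.sum_tsub_distrib _ (fun i hi => by
      rw [Finset.mem_Ico] at hi
      exact Nat.pow_le_pow_right (by norm_num) (by omega))]
    congr 1
    · rw [Finset.sum_Ico_eq_sum_range]
      have c2 : ∑ j ∈ Finset.range (m - 1), (2:ℕ) ^ (n - 1 - (1 + j))
          = ∑ j ∈ Finset.range (m - 1), 2 ^ ((n - 1) - 1 - j) :=
        Finset.sum_congr rfl (fun j _ => by congr 1; omega)
      rw [c2, pow_sum_desc (m - 1) (n - 1) (by omega)]
      congr 2; omega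
    · rw [Finset.sum_Ico_eq_sum_range]
      have c3 : ∑ j ∈ Finset.range (m - 1), (2:ℕ) ^ (m - 1 - (1 + j))
          = ∑ j ∈ Finset.range (m - 1), 2 ^ ((m - 1) - 1 - j) :=
        Finset.sum_congr rfl (fun j _ => by congr 1; omega)
      rw [c3, pow_sum_desc (m - 1) (m - 1) (le_refl _)]
      simp
  have etop : ∑ i ∈ Finset.Ico m n, (2 ^ (n - 1) - 1 - 2 ^ (m - 1) + 2 ^ i - 1) / 2 ^ i
      = 2 ^ (n - m) - 1 := by
    have c1 : ∑ i ∈ Finset.Ico m n, (2 ^ (n - 1) - 1 - 2 ^ (m - 1) + 2 ^ i - 1) / 2 ^ i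
        = ∑ i ∈ Finset.Ico m n, (2:ℕ) ^ (n - 1 - i) :=
      Finset.sum_congr rfl (fun i hi => by
        rw [Finset.mem_Ico] at hi
        exact hterm_top i hi.1 hi.2)
    rw [c1, Finset.sum_Ico_eq_sum_range]
    have c2 : ∑ j ∈ Finset.range (n - m), (2:ℕ) ^ (n - 1 - (m + j))
        = ∑ j ∈ Finset.range (n - m), 2 ^ ((n - m) - 1 - j) :=
      Finset.sum_congr rfl (fun j _ => by congr 1; omega)
    rw [c2, pow_sum_desc (n - m) (n - m) (le_refl _)]
    simp
  rw [e0, emid, etop]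
  have h1 : (2:ℕ) ^ n = 2 * 2 ^ (n - 1) := by rw [← pow_succ']; congr 1; omega
  have h2 : (2:ℕ) ^ m = 2 * 2 ^ (m - 1) := by rw [← pow_succ']; congr 1; omega
  have h3 : (2:ℕ) ^ (n - 1) = 2 * 2 ^ (n - 2) := by rw [← pow_succ']; congr 1; omega
  have h4 : (2:ℕ) ^ (m - 1) ≤ 2 ^ (n - 2) := Nat.pow_le_pow_right (by norm_num) (by omega)
  have h5 : (2:ℕ) ^ (n - m) ≤ 2 ^ (n - 2) := Nat.pow_le_pow_right (by norm_num) (by omega)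
  have h6 : (4:ℕ) ≤ 2 ^ (m - 1) := by
    calc (4:ℕ) = 2 ^ 2 := by norm_num
    _ ≤ 2 ^ (m - 1) := Nat.pow_le_pow_right (by norm_num) (by omega)
  have h7 : (1:ℕ) ≤ 2 ^ (n - m) := Nat.one_le_two_pow
  exact (show ∀ A B C E F G : ℕ, E = 2 * A → F = 2 * B → A = 2 * G → B ≤ G → C ≤ G →
      4 ≤ B → 1 ≤ C →
      A - 1 - B + (A - C - (B - 1)) + (C - 1) = E - 1 - F by intros; omega)
    _ _ _ _ _ _ h1 h2 h3 h4 h5 h6 h7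


-- ===== main theorem =====

/-- **Theorem 6.1(1).**  For `3 ≤ m ≤ n−1` and `B ⊆ [n]∖[m]` with `|B| = 1`, the
code `C_D` built from the ideal `[m] ∪ B` of `ℍ(m,n)` is a Griesmer code with
parameters `[2ⁿ − 1 − 2^m, n, 2^{n−1} − 1 − 2^{m−1}]`: the length is
`|D| = 2ⁿ − 1 − 2^m`, the map `u ↦ c_{D,u}` is injective (dimension `n`), the
minimum nonzero codeword weight is `d = 2^{n−1} − 1 − 2^{m−1}`, and
`Σ_{i=0}^{n−1} ⌈d/2ⁱ⌉ = 2ⁿ − 1 − 2^m`. -/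
theorem stmt_12 (n m : ℕ) (hm : 3 ≤ m) (hmn : m < n)
    (B : Finset (Fin n)) (hB : ∀ j ∈ B, m ≤ (j : ℕ)) (hBcard : B.card = 1)
    (D : Finset (Fin n → ZMod 2))
    (hD : D = Finset.univ.filter (fun x =>
      ¬ (HDownClosed n m (supp x) ∧ supp x ⊆ lowSet n m ∪ B))) :
    D.card = 2 ^ n - 1 - 2 ^ m
    ∧ (∀ u₁ u₂ : Fin n → ZMod 2, (∀ x ∈ D, ip u₁ x = ip u₂ x) → u₁ = u₂)
    ∧ (∀ u : Fin n → ZMod 2, wtD D u ≠ 0 → 2 ^ (n - 1) - 1 - 2 ^ (m - 1) ≤ wtD D u)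
    ∧ (∃ u : Fin n → ZMod 2, wtD D u = 2 ^ (n - 1) - 1 - 2 ^ (m - 1))
    ∧ ∑ i ∈ Finset.range n, (2 ^ (n - 1) - 1 - 2 ^ (m - 1) + 2 ^ i - 1) / 2 ^ i
        = 2 ^ n - 1 - 2 ^ m := by
  obtain ⟨b, hb⟩ := Finset.card_eq_one.mp hBcard
  have hmb : m ≤ (b : ℕ) := hB b (by rw [hb]; exact Finset.mem_singleton_self b)
  have hnpos : 0 < n := by omega
  -- the special vector xbvec n m b (indicator of [m] ∪ {b})
  have hxbval : ∀ i : Fin n, ((i : ℕ) < m ∨ i = b) → xbvec n m b i = 1 := by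
    intro i hi; rw [xbvec]; simp [hi]
  have hxbval0 : ∀ i : Fin n, ¬((i : ℕ) < m ∨ i = b) → xbvec n m b i = 0 := by
    intro i hi; rw [xbvec]; simp only [if_neg hi]
  have hsuppxb : supp (xbvec n m b) = lowSet n m ∪ {b} := by
    ext i
    simp only [supp, mem_filter, mem_univ, true_and, lowSet, Finset.mem_union,
      Finset.mem_singleton]
    by_cases h : (i : ℕ) < m ∨ i = b
    · rw [hxbval i h]
      simpa using h
    · rw [hxbval0 i h]
      simpa using h
  -- cardinality of lowSet
  have hlowmem : ∀ i : Fin n, i ∈ lowSet n m ↔ (i : ℕ) < m := by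
    intro i; simp [lowSet]
  have hlowcard : (lowSet n m).card = m := by
    have himg : lowSet n m = Finset.image (Fin.castLE (le_of_lt hmn)) Finset.univ := by
      ext i
      simp only [lowSet, mem_filter, mem_univ, true_and, Finset.mem_image]
      constructor
      · intro h
        exact ⟨⟨(i : ℕ), h⟩, Fin.ext rfl⟩
      · rintro ⟨a, -, rfl⟩
        exact a.isLt
    rw [himg, Finset.card_image_of_injective _ (Fin.castLE_injective _),
      Finset.card_univ, Fintype.card_fin]
  -- characterization of the down-closed ideals contained in [m] ∪ B
  have hPiff : ∀ x : Fin n → ZMod 2,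
      (HDownClosed n m (supp x) ∧ supp x ⊆ lowSet n m ∪ B)
        ↔ ((∀ i ∉ lowSet n m, x i = 0) ∨ x = xbvec n m b) := by
    intro x
    constructor
    · rintro ⟨hdc, hsub⟩
      by_cases h0 : ∀ i ∉ lowSet n m, x i = 0
      · exact Or.inl h0
      · right
        push_neg at h0
        obtain ⟨j, hj, hxj⟩ := h0
        have hjm : m ≤ (j : ℕ) := by
          rw [hlowmem] at hj; omega
        have hjsupp : j ∈ supp x := by
          simp [supp, hxj]
        have hjb : j = b := by
          rcases Finset.mem_union.mp (hsub hjsupp) with h | h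
          · exact absurd h hj
          · rw [hb] at h; exact Finset.mem_singleton.mp h
        have hlow : ∀ i : Fin n, (i : ℕ) < m → i ∈ supp x := by
          intro i hi
          exact hdc i j (Or.inr ⟨hi, hjm⟩) hjsupp
        apply supp_inj
        rw [hsuppxb]
        apply Finset.Subset.antisymm
        · intro i hi
          rcases Finset.mem_union.mp (hsub hi) with h | h
          · exact Finset.mem_union_left _ h
          · rw [hb] at h
            exact Finset.mem_union_right _ h
        · intro i hi
          rcases Finset.mem_union.mp hi with h | h
          · exact hlow i ((hlowmem i).mp h)
          · rw [Finset.mem_singleton] at h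
            rw [h, ← hjb]
            exact hjsupp
    · rintro (h0 | rfl)
      · constructor
        · intro i j hij hjmem
          rcases hij with rfl | ⟨him, hjm⟩
          · exact hjmem
          · exfalso
            have hxj : x j ≠ 0 := by
              simpa [supp] using hjmem
            by_cases hjl : j ∈ lowSet n m
            · rw [hlowmem] at hjl; omega
            · exact hxj (h0 j hjl)
        · intro i hi
          apply Finset.mem_union_left
          by_contra hni
          have : x i = 0 := h0 i hni
          simp [supp, this] at hi
      · constructor
        · intro i j hij hjmem
          rcases hij with rfl | ⟨him, _⟩
          · exact hjmem
          · rw [hsuppxb]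
            exact Finset.mem_union_left _ ((hlowmem i).mpr him)
        · rw [hsuppxb, hb]
    -- xbvec n m b is not supported in the low set
  have hxbnot : ¬ (∀ i ∉ lowSet n m, xbvec n m b i = 0) := by
    intro h
    have hbnot : b ∉ lowSet n m := by
      rw [hlowmem]; omega
    have := h b hbnot
    rw [hxbval b (Or.inr rfl)] at this
    exact one_ne_zero this
  -- cardinality of the universe
  have huniv : (univ : Finset (Fin n → ZMod 2)).card = 2 ^ n := by
    rw [Finset.card_univ, Fintype.card_fun]
    simp
  -- the set A of "bad" vectors and its cardinality
  have hAeq : (univ.filter fun x : Fin n → ZMod 2 =>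
        HDownClosed n m (supp x) ∧ supp x ⊆ lowSet n m ∪ B)
      = (univ.filter fun x : Fin n → ZMod 2 => ∀ i ∉ lowSet n m, x i = 0) ∪ {xbvec n m b} := by
    ext x
    simp only [mem_filter, mem_univ, true_and, Finset.mem_union, Finset.mem_singleton]
    exact hPiff x
  have hAcard : (univ.filter fun x : Fin n → ZMod 2 =>
        HDownClosed n m (supp x) ∧ supp x ⊆ lowSet n m ∪ B).card = 2 ^ m + 1 := by
    rw [hAeq, Finset.card_union_of_disjoint, card_supp_subset, hlowcard,
      Finset.card_singleton]
    rw [Finset.disjoint_singleton_right]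
    intro hmem
    exact hxbnot (Finset.mem_filter.mp hmem).2
  -- |D|
  have hDcard : D.card = 2 ^ n - 1 - 2 ^ m := by
    have hsum := Finset.card_filter_add_card_filter_not
      (s := (univ : Finset (Fin n → ZMod 2)))
      (p := fun x => HDownClosed n m (supp x) ∧ supp x ⊆ lowSet n m ∪ B)
    rw [huniv, hAcard] at hsum
    have hDc : D.card = 2 ^ n - (2 ^ m + 1) := by
      rw [hD]; omega
    have hmn2 : (2:ℕ) ^ m + 1 ≤ 2 ^ n := by
      have : (2:ℕ) ^ m < 2 ^ n := Nat.pow_lt_pow_right (by norm_num) hmn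
      omega
    omega
  -- the weight decomposition
  have hsum : ∀ u : Fin n → ZMod 2,
      wtD D u + (univ.filter fun x : Fin n → ZMod 2 =>
        (HDownClosed n m (supp x) ∧ supp x ⊆ lowSet n m ∪ B) ∧ ip u x = 1).card
      = (univ.filter fun x : Fin n → ZMod 2 => ip u x = 1).card := by
    intro u
    have hDF : D.filter (fun x => ip u x = 1)
        = univ.filter fun x : Fin n → ZMod 2 =>
            (¬ (HDownClosed n m (supp x) ∧ supp x ⊆ lowSet n m ∪ B)) ∧ ip u x = 1 := by
      rw [hD, Finset.filter_filter]
    have hun : (univ.filter fun x : Fin n → ZMod 2 =>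
          (¬ (HDownClosed n m (supp x) ∧ supp x ⊆ lowSet n m ∪ B)) ∧ ip u x = 1)
        ∪ (univ.filter fun x : Fin n → ZMod 2 =>
          (HDownClosed n m (supp x) ∧ supp x ⊆ lowSet n m ∪ B) ∧ ip u x = 1)
        = univ.filter fun x : Fin n → ZMod 2 => ip u x = 1 := by
      ext x
      simp only [Finset.mem_union, mem_filter, mem_univ, true_and]
      tauto
    have hdisj : Disjoint
        (univ.filter fun x : Fin n → ZMod 2 =>
          (¬ (HDownClosed n m (supp x) ∧ supp x ⊆ lowSet n m ∪ B)) ∧ ip u x = 1)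
        (univ.filter fun x : Fin n → ZMod 2 =>
          (HDownClosed n m (supp x) ∧ supp x ⊆ lowSet n m ∪ B) ∧ ip u x = 1) := by
      rw [Finset.disjoint_left]
      intro x h1 h2
      simp only [mem_filter, mem_univ, true_and] at h1 h2
      exact h1.1 h2.1
    have := Finset.card_union_of_disjoint hdisj
    rw [hun] at this
    rw [wtD, hDF, ← this]
  -- count of the bad part of each codeword
  have hbad : ∀ u : Fin n → ZMod 2,
      (univ.filter fun x : Fin n → ZMod 2 =>
        (HDownClosed n m (supp x) ∧ supp x ⊆ lowSet n m ∪ B) ∧ ip u x = 1).card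
      = (univ.filter fun x : Fin n → ZMod 2 =>
          (∀ i ∉ lowSet n m, x i = 0) ∧ ip u x = 1).card
        + (if ip u (xbvec n m b) = 1 then 1 else 0) := by
    intro u
    have hsplit : (univ.filter fun x : Fin n → ZMod 2 =>
          (HDownClosed n m (supp x) ∧ supp x ⊆ lowSet n m ∪ B) ∧ ip u x = 1)
        = (univ.filter fun x : Fin n → ZMod 2 =>
            (∀ i ∉ lowSet n m, x i = 0) ∧ ip u x = 1)
          ∪ (univ.filter fun x : Fin n → ZMod 2 => x = xbvec n m b ∧ ip u x = 1) := by
      ext x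
      simp only [Finset.mem_union, mem_filter, mem_univ, true_and]
      rw [and_comm (a := HDownClosed n m (supp x)) (b := supp x ⊆ lowSet n m ∪ B)] at *
      constructor
      · rintro ⟨hp, hq⟩
        rcases (hPiff x).mp (And.intro hp.2 hp.1) with h | h
        · exact Or.inl ⟨h, hq⟩
        · exact Or.inr ⟨h, hq⟩
      · rintro (⟨h, hq⟩ | ⟨h, hq⟩)
        · rcases (hPiff x).mpr (Or.inl h) with ⟨h1, h2⟩
          exact ⟨⟨h2, h1⟩, hq⟩
        · rcases (hPiff x).mpr (Or.inr h) with ⟨h1, h2⟩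
          exact ⟨⟨h2, h1⟩, hq⟩
    have hdisj : Disjoint
        (univ.filter fun x : Fin n → ZMod 2 =>
          (∀ i ∉ lowSet n m, x i = 0) ∧ ip u x = 1)
        (univ.filter fun x : Fin n → ZMod 2 => x = xbvec n m b ∧ ip u x = 1) := by
      rw [Finset.disjoint_left]
      intro x h1 h2
      simp only [mem_filter, mem_univ, true_and] at h1 h2
      rw [h2.1] at h1
      exact hxbnot h1.1
    have hsingle : (univ.filter fun x : Fin n → ZMod 2 => x = xbvec n m b ∧ ip u x = 1).card
        = if ip u (xbvec n m b) = 1 then 1 else 0 := by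
      by_cases h : ip u (xbvec n m b) = 1
      · rw [if_pos h]
        have : (univ.filter fun x : Fin n → ZMod 2 => x = xbvec n m b ∧ ip u x = 1) = {xbvec n m b} := by
          ext x
          simp only [mem_filter, mem_univ, true_and, Finset.mem_singleton]
          constructor
          · exact fun hx => hx.1
          · rintro rfl; exact ⟨rfl, h⟩
        rw [this, Finset.card_singleton]
      · rw [if_neg h]
        rw [Finset.card_eq_zero, Finset.filter_eq_empty_iff]
        rintro x - ⟨rfl, hip⟩
        exact h hip
    rw [hsplit, Finset.card_union_of_disjoint hdisj, hsingle]
  -- total count for nonzero u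
  have hN1 : ∀ u : Fin n → ZMod 2, u ≠ 0 →
      (univ.filter fun x : Fin n → ZMod 2 => ip u x = 1).card = 2 ^ (n - 1) := by
    intro u hu
    obtain ⟨i₀, hi₀⟩ : ∃ i, u i ≠ 0 := by
      by_contra h
      push_neg at h
      exact hu (funext h)
    have heq : (univ.filter fun x : Fin n → ZMod 2 => ip u x = 1)
        = (univ.filter fun x : Fin n → ZMod 2 =>
            (∀ i ∉ (univ : Finset (Fin n)), x i = 0) ∧ ip u x = 1) := by
      apply Finset.filter_congr
      intro x _
      simp
    rw [heq, card_ip_one univ u i₀ (Finset.mem_univ i₀) hi₀, Finset.card_univ,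
      Fintype.card_fin]
  -- low-part count
  have hclow1 : ∀ u : Fin n → ZMod 2, ∀ i₀ : Fin n, (i₀ : ℕ) < m → u i₀ ≠ 0 →
      (univ.filter fun x : Fin n → ZMod 2 =>
        (∀ i ∉ lowSet n m, x i = 0) ∧ ip u x = 1).card = 2 ^ (m - 1) := by
    intro u i₀ hi₀m hu
    rw [card_ip_one (lowSet n m) u i₀ ((hlowmem i₀).mpr hi₀m) hu, hlowcard]
  have hclow0 : ∀ u : Fin n → ZMod 2, (∀ i : Fin n, (i : ℕ) < m → u i = 0) →
      (univ.filter fun x : Fin n → ZMod 2 =>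
        (∀ i ∉ lowSet n m, x i = 0) ∧ ip u x = 1).card = 0 := by
    intro u hu
    exact card_ip_zero_case (lowSet n m) u (fun i hi => hu i ((hlowmem i).mp hi))
  -- basic numeric facts
  have hp1 : (2:ℕ) ^ m = 2 * 2 ^ (m - 1) := by
    rw [← pow_succ']; congr 1; omega
  have hp2 : (2:ℕ) ^ m ≤ 2 ^ (n - 1) := Nat.pow_le_pow_right (by norm_num) (by omega)
  have hp3 : (4:ℕ) ≤ 2 ^ (m - 1) := by
    calc (4:ℕ) = 2 ^ 2 := by norm_num
    _ ≤ 2 ^ (m - 1) := Nat.pow_le_pow_right (by norm_num) (by omega)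
  -- lower bound for nonzero u
  have hlb : ∀ u : Fin n → ZMod 2, u ≠ 0 →
      2 ^ (n - 1) - 1 - 2 ^ (m - 1) ≤ wtD D u := by
    intro u hu
    have h1 := hsum u
    rw [hbad u, hN1 u hu] at h1
    have hc : (univ.filter fun x : Fin n → ZMod 2 =>
        (∀ i ∉ lowSet n m, x i = 0) ∧ ip u x = 1).card ≤ 2 ^ (m - 1) := by
      by_cases hv : ∃ i₀ : Fin n, (i₀ : ℕ) < m ∧ u i₀ ≠ 0
      · obtain ⟨i₀, hi₀m, hui₀⟩ := hv
        rw [hclow1 u i₀ hi₀m hui₀]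
      · push_neg at hv
        rw [hclow0 u (fun i hi => hv i hi)]
        exact Nat.zero_le _
    obtain ⟨ε, hεle, hεeq⟩ : ∃ ε : ℕ, ε ≤ 1 ∧
        (if ip u (xbvec n m b) = 1 then (1:ℕ) else 0) = ε := by
      by_cases h : ip u (xbvec n m b) = 1
      · exact ⟨1, le_refl 1, if_pos h⟩
      · exact ⟨0, by norm_num, if_neg h⟩
    rw [hεeq] at h1
    generalize hC : (univ.filter fun x : Fin n → ZMod 2 =>
        (∀ i ∉ lowSet n m, x i = 0) ∧ ip u x = 1).card = C at h1 hc
    clear * - h1 hc hεle hp1 hp2 hp3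
    omega
  have hdpos : 0 < 2 ^ (n - 1) - 1 - 2 ^ (m - 1) := by
    clear * - hp1 hp2 hp3
    omega
  -- injectivity
  have hinj : ∀ u₁ u₂ : Fin n → ZMod 2, (∀ x ∈ D, ip u₁ x = ip u₂ x) → u₁ = u₂ := by
    intro u₁ u₂ h
    by_contra hne
    have hw : u₁ + u₂ ≠ 0 := by
      intro h0
      apply hne
      funext i
      have := congrFun h0 i
      simp only [Pi.add_apply, Pi.zero_apply] at this
      revert this
      have hz : ∀ a c : ZMod 2, a + c = 0 → a = c := by decide
      exact hz _ _
    have hzero : wtD D (u₁ + u₂) = 0 := by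
      rw [wtD, Finset.card_eq_zero, Finset.filter_eq_empty_iff]
      intro x hx
      rw [ip_add_left, h x hx,
        (show ∀ a : ZMod 2, a + a = 0 by decide) (ip u₂ x)]
      decide
    have hge := hlb (u₁ + u₂) hw
    clear * - hge hzero hdpos
    omega
  -- the minimum weight is attained
  have hex : ∃ u : Fin n → ZMod 2, wtD D u = 2 ^ (n - 1) - 1 - 2 ^ (m - 1) := by
    obtain ⟨i₀, hi₀⟩ : ∃ i₀ : Fin n, (i₀ : ℕ) = 0 := ⟨⟨0, hnpos⟩, rfl⟩
    refine ⟨sing i₀, ?_⟩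
    have hui₀ : sing i₀ i₀ = 1 := by simp [sing]
    have hune : sing i₀ ≠ 0 := by
      intro h0
      have := congrFun h0 i₀
      rw [hui₀] at this
      exact one_ne_zero this
    have hi₀m : (i₀ : ℕ) < m := by
      rw [hi₀]; exact Nat.lt_of_lt_of_le (by norm_num) hm
    have h1 := hsum (sing i₀)
    rw [hbad (sing i₀), hN1 (sing i₀) hune,
      hclow1 (sing i₀) i₀ hi₀m (by rw [hui₀]; exact one_ne_zero)] at h1
    have hip : ip (sing i₀) (xbvec n m b) = 1 := by
      rw [ip_single_left]
      exact hxbval i₀ (Or.inl hi₀m)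
    rw [if_pos hip] at h1
    clear * - h1 hp1 hp2 hp3
    omega
  -- min weight statement
  have hmin : ∀ u : Fin n → ZMod 2, wtD D u ≠ 0 →
      2 ^ (n - 1) - 1 - 2 ^ (m - 1) ≤ wtD D u := by
    intro u hne
    by_cases hu : u = 0
    · exfalso
      apply hne
      rw [hu, wtD, Finset.card_eq_zero, Finset.filter_eq_empty_iff]
      intro x _
      have : ip (0 : Fin n → ZMod 2) x = 0 := by
        simp [ip]
      rw [this]
      decide
    · exact hlb u hu
  exact ⟨hDcard, hinj, hmin, hex, griesmer_sum n m hm hmn⟩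
end

section
/- Let n ≥ 3, m = 1, and B = [n]∖{1} (so |B| = n − 1). Set D = {x ∈ 𝔽₂ⁿ : supp(x) is not a down-closed subset of ℍ(1,n)}. Then the code C_D is a binary Griesmer code with parameters [2^{n−1} − 1, n − 1, 2^{n−2}]: its length is |D| = 2^{n−1} − 1; the set {c_{D,u} : u ∈ 𝔽₂ⁿ} has exactly 2^{n−1} elements (so C_D has dimension n − 1); the minimum weight of a nonzero codeword is 2^{n−2}; and Σ_{i=0}^{n−2} ⌈2^{n−2}/2^i⌉ = 2^{n−1} − 1, i.e., the Griesmer bound is met with equality. -/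
open Finset

section Aux

set_option linter.unnecessarySeqFocus false

variable {n : ℕ} [NeZero n]

/-- Extension by zero at coordinate `0`. -/
def extFun (y : {i : Fin n // i ≠ 0} → ZMod 2) : Fin n → ZMod 2 :=
  fun i => if h : i = 0 then 0 else y ⟨i, h⟩

lemma extFun_zero_apply (y : {i : Fin n // i ≠ 0} → ZMod 2) : extFun y 0 = 0 := by
  simp [extFun]

lemma extFun_apply (y : {i : Fin n // i ≠ 0} → ZMod 2) (j : {i : Fin n // i ≠ 0}) :
    extFun y j.1 = y j := by
  rw [extFun, dif_neg j.2]

lemma extFun_inj : Function.Injective (extFun (n := n)) := by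
  intro y z h
  funext j
  have := congrFun h j.1
  rwa [extFun_apply, extFun_apply] at this

lemma extFun_zero : extFun (n := n) 0 = 0 := by
  funext i
  by_cases h : i = 0 <;> simp [extFun, h]

lemma card_iota : Fintype.card {i : Fin n // i ≠ 0} = n - 1 := by
  simp [Fintype.card_subtype_compl]

lemma ip_split (u x : Fin n → ZMod 2) (hx : x 0 = 0) :
    ip u x = ∑ j : {i : Fin n // i ≠ 0}, u j.1 * x j.1 := by
  have h1 : ip u x = ∑ i ∈ univ.filter (fun i : Fin n => i = 0), u i * x i
      + ∑ i ∈ univ.filter (fun i : Fin n => ¬ i = 0), u i * x i := by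
    rw [Finset.sum_filter_add_sum_filter_not]; rfl
  have h2 : ∑ i ∈ univ.filter (fun i : Fin n => i = 0), u i * x i = 0 := by
    rw [Finset.filter_eq']
    simp [hx]
  have h3 : ∑ i ∈ univ.filter (fun i : Fin n => ¬ i = 0), u i * x i
      = ∑ j : {i : Fin n // i ≠ 0}, u j.1 * x j.1 := by
    rw [Finset.sum_subtype (p := fun i : Fin n => i ≠ 0)
      (univ.filter (fun i : Fin n => ¬ i = 0)) (by intro i; simp) (fun i => u i * x i)]
  rw [h1, h2, h3, zero_add]

lemma sum_mul_single {α : Type*} [Fintype α] [DecidableEq α] (v : α → ZMod 2) (j : α) :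
    ∑ j', v j' * (Pi.single j 1 : α → ZMod 2) j' = v j := by
  have h : ∀ j', v j' * (Pi.single j 1 : α → ZMod 2) j' = if j' = j then v j' else 0 := by
    intro j'; by_cases h : j' = j <;> simp [Pi.single_apply, h]
  rw [Finset.sum_congr rfl (fun j' _ => h j'), Finset.sum_ite_eq' univ j v]
  simp

lemma count_half {α : Type*} [Fintype α] [DecidableEq α] (v : α → ZMod 2) (hv : v ≠ 0) :
    2 * (univ.filter (fun y : α → ZMod 2 => ∑ j, v j * y j = 1)).card
      = 2 ^ Fintype.card α := by
  have hz : ∀ a : ZMod 2, a ≠ 0 → a = 1 := by decide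
  have hz' : ∀ a : ZMod 2, a ≠ 1 → a = 0 := by decide
  obtain ⟨j₀, hj₀⟩ : ∃ j₀, v j₀ ≠ 0 := by
    by_contra h; push_neg at h; exact hv (funext fun j => h j)
  have hvj : v j₀ = 1 := hz _ hj₀
  set T : (α → ZMod 2) → (α → ZMod 2) := fun y => y + Pi.single j₀ 1 with hT
  have hsum : ∀ y : α → ZMod 2, ∑ j, v j * T y j = (∑ j, v j * y j) + 1 := by
    intro y
    have h : ∀ j, v j * T y j = v j * y j + v j * (Pi.single j₀ 1 : α → ZMod 2) j := by
      intro j; simp [hT, mul_add]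
    rw [Finset.sum_congr rfl (fun j _ => h j), Finset.sum_add_distrib, sum_mul_single, hvj]
  have hcards : (univ.filter (fun y : α → ZMod 2 => ∑ j, v j * y j = 1)).card
      = (univ.filter (fun y : α → ZMod 2 => ¬ (∑ j, v j * y j = 1))).card := by
    apply Finset.card_nbij' (i := T) (j := T)
    · intro y hy
      simp only [Finset.mem_coe, mem_filter, mem_univ, true_and] at hy ⊢
      rw [hsum, hy]; decide
    · intro y hy
      simp only [Finset.mem_coe, mem_filter, mem_univ, true_and] at hy ⊢
      rw [hsum, hz' _ hy]; decide
    · intro y _; funext j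
      simp only [hT, Pi.add_apply, Pi.single_apply]
      by_cases h : j = j₀ <;> simp [h, add_assoc] <;> decide
    · intro y _; funext j
      simp only [hT, Pi.add_apply, Pi.single_apply]
      by_cases h : j = j₀ <;> simp [h, add_assoc] <;> decide
  have htot : (univ.filter (fun y : α → ZMod 2 => ∑ j, v j * y j = 1)).card
      + (univ.filter (fun y : α → ZMod 2 => ¬ (∑ j, v j * y j = 1))).card
      = 2 ^ Fintype.card α := by
    classical
    rw [Finset.card_filter_add_card_filter_not, Finset.card_univ,
      Fintype.card_fun]
    simp
  rw [two_mul]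
  nth_rewrite 2 [hcards]
  exact htot

/-- Characterisation of the defining set `D` for `m = 1`. -/
lemma notDC_iff (x : Fin n → ZMod 2) :
    ¬ HDownClosed n 1 (supp x) ↔ x 0 = 0 ∧ x ≠ 0 := by
  constructor
  · intro h
    unfold HDownClosed at h
    push_neg at h
    obtain ⟨i, j, hle, hjS, hiS⟩ := h
    rcases hle with e | ⟨hi, hj⟩
    · exact absurd (e ▸ hjS) hiS
    · have hi0 : i = 0 := by
        apply Fin.ext
        simpa using Nat.lt_one_iff.mp hi
      subst hi0
      constructor
      · simpa [supp] using hiS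
      · intro hx
        rw [hx] at hjS
        simp [supp] at hjS
  · rintro ⟨h0, hx⟩ hDC
    obtain ⟨j, hj⟩ : ∃ j, x j ≠ 0 := Function.ne_iff.mp hx
    have hj0 : j ≠ 0 := by
      intro e; rw [e, h0] at hj; exact hj rfl
    have hjv : 1 ≤ (j : ℕ) := by
      have : (j : ℕ) ≠ 0 := fun e => hj0 (Fin.ext (by simpa using e))
      omega
    have h0mem : (0 : Fin n) ∈ supp x :=
      hDC 0 j (Or.inr ⟨by simp, hjv⟩) (by simp [supp, hj])
    simp [supp, h0] at h0mem

lemma geo2 (k : ℕ) : ∑ i ∈ Finset.range k, 2 ^ i = 2 ^ k - 1 := by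
  induction k with
  | zero => simp
  | succ k ih =>
    rw [Finset.sum_range_succ, ih, pow_succ]
    have := Nat.one_le_two_pow (n := k)
    omega

end Aux

/-- **Theorem 6.1(2).**  For `n ≥ 3`, `m = 1` and `B = [n] ∖ [1]`, the code `C_D`
with `D = {x : supp(x) is not down-closed in ℍ(1,n)}` is a Griesmer code with
parameters `[2^{n−1} − 1, n − 1, 2^{n−2}]`: the length is `|D| = 2^{n−1} − 1`,
there are exactly `2^{n−1}` distinct codewords `c_{D,u}` (dimension `n − 1`), the
minimum nonzero codeword weight is `2^{n−2}`, and
`Σ_{i=0}^{n−2} ⌈2^{n−2}/2ⁱ⌉ = 2^{n−1} − 1`. -/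
theorem stmt_13 (n : ℕ) (hn : 3 ≤ n)
    (D : Finset (Fin n → ZMod 2))
    (hD : D = Finset.univ.filter (fun x => ¬ HDownClosed n 1 (supp x))) :
    D.card = 2 ^ (n - 1) - 1
    ∧ (Finset.univ.image
        (fun u : Fin n → ZMod 2 =>
          fun x : {y : Fin n → ZMod 2 // y ∈ D} => ip u x.1)).card = 2 ^ (n - 1)
    ∧ (∀ u : Fin n → ZMod 2, wtD D u ≠ 0 → 2 ^ (n - 2) ≤ wtD D u)
    ∧ (∃ u : Fin n → ZMod 2, wtD D u = 2 ^ (n - 2))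
    ∧ ∑ i ∈ Finset.range (n - 1), (2 ^ (n - 2) + 2 ^ i - 1) / 2 ^ i
        = 2 ^ (n - 1) - 1 := by
  haveI : NeZero n := ⟨by omega⟩
  -- membership characterisation
  have hmem : ∀ x, x ∈ D ↔ x 0 = 0 ∧ x ≠ 0 := by
    intro x; rw [hD]; simp [notDC_iff]
  -- D as an image
  have hDim : D = ((univ : Finset ({i : Fin n // i ≠ 0} → ZMod 2)).filter
      (fun y => y ≠ 0)).image extFun := by
    ext x
    simp only [mem_image, mem_filter, mem_univ, true_and, hmem]
    constructor
    · rintro ⟨h0, hx⟩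
      refine ⟨fun j => x j.1, ?_, ?_⟩
      · intro hy
        apply hx
        funext i
        by_cases h : i = 0
        · rw [h, h0]; rfl
        · have := congrFun hy ⟨i, h⟩
          simpa using this
      · funext i
        by_cases h : i = 0
        · rw [h, extFun_zero_apply, h0]
        · exact extFun_apply _ ⟨i, h⟩
    · rintro ⟨y, hy, rfl⟩
      refine ⟨extFun_zero_apply y, ?_⟩
      intro h
      exact hy (extFun_inj (by rw [h, extFun_zero]))
  have hpow : 2 ^ (n - 1) = 2 * 2 ^ (n - 2) := by
    have : n - 1 = (n - 2) + 1 := by omega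
    rw [this, pow_succ]; ring
  -- Part 1
  have part1 : D.card = 2 ^ (n - 1) - 1 := by
    rw [hDim, Finset.card_image_of_injective _ extFun_inj, Finset.filter_ne',
      Finset.card_erase_of_mem (mem_univ _), Finset.card_univ, Fintype.card_fun,
      card_iota]
    simp
  -- weight dichotomy
  have hwt0 : ∀ u : Fin n → ZMod 2, (∀ j : {i : Fin n // i ≠ 0}, u j.1 = 0) →
      wtD D u = 0 := by
    intro u hu
    rw [wtD, Finset.card_eq_zero, Finset.filter_eq_empty_iff]
    intro x hx
    rw [ip_split u x ((hmem x).mp hx).1]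
    have : ∀ j : {i : Fin n // i ≠ 0}, u j.1 * x j.1 = 0 := by
      intro j; rw [hu j, zero_mul]
    rw [Finset.sum_congr rfl (fun j _ => this j)]
    simp
  have hwt1 : ∀ u : Fin n → ZMod 2, (∃ j : {i : Fin n // i ≠ 0}, u j.1 ≠ 0) →
      wtD D u = 2 ^ (n - 2) := by
    intro u hu
    set v : {i : Fin n // i ≠ 0} → ZMod 2 := fun j => u j.1 with hv
    have hvne : v ≠ 0 := by
      obtain ⟨j, hj⟩ := hu
      intro h; exact hj (congrFun h j)
    have key : wtD D u = (univ.filter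
        (fun y : {i : Fin n // i ≠ 0} → ZMod 2 => ∑ j, v j * y j = 1)).card := by
      rw [wtD, hDim, Finset.filter_image, Finset.card_image_of_injective _ extFun_inj,
        Finset.filter_filter]
      congr 1
      apply Finset.filter_congr
      intro y _
      have hips : ip u (extFun y) = ∑ j, v j * y j := by
        rw [ip_split u (extFun y) (extFun_zero_apply y)]
        exact Finset.sum_congr rfl (fun j _ => by rw [extFun_apply])
      constructor
      · rintro ⟨-, h⟩; rwa [hips] at h
      · intro h
        refine ⟨?_, by rwa [hips]⟩
        intro hy0
        rw [hy0] at h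
        simp at h
    have h2 := count_half v hvne
    rw [card_iota, hpow] at h2
    rw [key]
    exact Nat.eq_of_mul_eq_mul_left (by norm_num) h2
  -- Part 3
  have part3 : ∀ u : Fin n → ZMod 2, wtD D u ≠ 0 → 2 ^ (n - 2) ≤ wtD D u := by
    intro u hu
    by_cases h : ∃ j : {i : Fin n // i ≠ 0}, u j.1 ≠ 0
    · rw [hwt1 u h]
    · push_neg at h
      exact absurd (hwt0 u h) hu
  -- Part 4
  have part4 : ∃ u : Fin n → ZMod 2, wtD D u = 2 ^ (n - 2) := by
    refine ⟨fun i => if (i : ℕ) = 1 then 1 else 0, hwt1 _ ?_⟩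
    refine ⟨⟨⟨1, by omega⟩, ?_⟩, ?_⟩
    · intro h
      have := congrArg Fin.val h
      simp at this
    · simp
  -- Part 2
  have part2 : (Finset.univ.image
      (fun u : Fin n → ZMod 2 =>
        fun x : {y : Fin n → ZMod 2 // y ∈ D} => ip u x.1)).card = 2 ^ (n - 1) := by
    set G : ({i : Fin n // i ≠ 0} → ZMod 2) → ({y : Fin n → ZMod 2 // y ∈ D} → ZMod 2) :=
      fun v x => ∑ j : {i : Fin n // i ≠ 0}, v j * x.1 j.1 with hG
    set r : (Fin n → ZMod 2) → ({i : Fin n // i ≠ 0} → ZMod 2) :=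
      fun u j => u j.1 with hr
    have hfac : (fun u : Fin n → ZMod 2 =>
        fun x : {y : Fin n → ZMod 2 // y ∈ D} => ip u x.1) = G ∘ r := by
      funext u
      funext x
      exact ip_split u x.1 ((hmem x.1).mp x.2).1
    have hrsurj : Function.Surjective r := by
      intro v
      exact ⟨extFun v, funext fun j => extFun_apply v j⟩
    have hGinj : Function.Injective G := by
      intro v w h
      funext j
      have hxmem : extFun (Pi.single j (1 : ZMod 2)) ∈ D := by
        rw [hmem]
        refine ⟨extFun_zero_apply _, ?_⟩
        intro he
        have : (Pi.single j (1 : ZMod 2) : {i : Fin n // i ≠ 0} → ZMod 2) = 0 :=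
          extFun_inj (by rw [he, extFun_zero])
        have := congrFun this j
        simp at this
      have hkey := congrFun h ⟨extFun (Pi.single j (1 : ZMod 2)), hxmem⟩
      simp only [hG] at hkey
      have hrw : ∀ (v' : {i : Fin n // i ≠ 0} → ZMod 2),
          ∑ j' : {i : Fin n // i ≠ 0}, v' j' * extFun (Pi.single j (1 : ZMod 2)) j'.1
            = v' j := by
        intro v'
        rw [Finset.sum_congr rfl (fun j' _ => by rw [extFun_apply])]
        exact sum_mul_single v' j
      rw [hrw v, hrw w] at hkey
      exact hkey
    rw [hfac, ← Finset.image_image, Finset.image_univ_of_surjective hrsurj,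
      Finset.card_image_of_injective _ hGinj, Finset.card_univ, Fintype.card_fun,
      card_iota]
    simp
  -- Part 5
  have part5 : ∑ i ∈ Finset.range (n - 1), (2 ^ (n - 2) + 2 ^ i - 1) / 2 ^ i
      = 2 ^ (n - 1) - 1 := by
    have hterm : ∀ i ∈ Finset.range (n - 1),
        (2 ^ (n - 2) + 2 ^ i - 1) / 2 ^ i = 2 ^ (n - 2 - i) := by
      intro i hi
      rw [Finset.mem_range] at hi
      have hle : i ≤ n - 2 := by omega
      have hp : 2 ^ (n - 2 - i) * 2 ^ i = 2 ^ (n - 2) := by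
        rw [← pow_add]
        congr 1
        omega
      have h1 : (1 : ℕ) ≤ 2 ^ i := Nat.one_le_two_pow
      have h2 : (1 : ℕ) ≤ 2 ^ (n - 2) := Nat.one_le_two_pow
      have heq : 2 ^ (n - 2) + 2 ^ i - 1 = (2 ^ i - 1) + 2 ^ (n - 2 - i) * 2 ^ i := by
        omega
      rw [heq, Nat.add_mul_div_right _ _ (Nat.pos_of_ne_zero (by positivity)),
        Nat.div_eq_of_lt (by omega), zero_add]
    rw [Finset.sum_congr rfl hterm]
    have hrefl := Finset.sum_range_reflect (fun i => 2 ^ i) (n - 1)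
    have hn2 : ∀ i ∈ Finset.range (n - 1), 2 ^ (n - 2 - i) = 2 ^ (n - 1 - 1 - i) := by
      intro i _
      rfl
    rw [Finset.sum_congr rfl hn2]
    rw [hrefl]
    exact geo2 _
  exact ⟨part1, part2, part3, part4, part5⟩
end
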